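/- Let $f: \Omega_x \times \Omega_y \to \mathbb{R}$, fix points $x_1,\dots,x_Q \in \Omega_x$ and $y_1,\dots,y_Q \in \Omega_y$ such that the matrix $M_Q = [f(x_i, y_j)]_{i,j=1}^Q$ is invertible and satisfies the maximum volume condition $|\det M_Q| \ge |\det M_q(y)|$ for all $q = 1,\dots,Q$ and all $y \in \Omega_y$, where $M_q(y)$ arises from $M_Q$ by replacing its $q$-th column with the vector $(f(x_1,y),\dots,f(x_Q,y))^T$. Then $\sigma_2[f] := \sup_{y \in \Omega_y} \| M_Q^{-1} (f(x_1,y),\dots,f(x_Q,y))^T \|_{\ell^1} \le Q$. -/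

import Mathlib

/-- Under the maximum volume condition, the ℓ¹ norm of `M_Q⁻¹ (f(x₁,y),…,f(x_Q,y))ᵀ`
is bounded by `Q`, i.e. `σ₂[f] ≤ Q`. -/
theorem maxvol_sigma2_le {Ωx Ωy : Type*} {Q : ℕ}
    (f : Ωx → Ωy → ℝ) (x : Fin Q → Ωx) (y : Fin Q → Ωy)
    (M : Matrix (Fin Q) (Fin Q) ℝ) (hM : M = Matrix.of fun i j => f (x i) (y j))
    (hMinv : IsUnit M.det)
    (hmaxvol : ∀ (q : Fin Q) (y' : Ωy),
      |(M.updateCol q (fun i => f (x i) y')).det| ≤ |M.det|) :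
    ∀ y' : Ωy, ∑ q : Fin Q, |(M⁻¹.mulVec fun i => f (x i) y') q| ≤ (Q : ℝ) := by
  intro y'
  have hdet : M.det ≠ 0 := hMinv.ne_zero
  have hcramer := M.det_smul_inv_mulVec_eq_cramer (fun i => f (x i) y') hMinv
  have key : ∀ q : Fin Q, |(M⁻¹.mulVec fun i => f (x i) y') q| ≤ 1 := by
    intro q
    have h1 : M.det * (M⁻¹.mulVec fun i => f (x i) y') q
        = (M.updateCol q (fun i => f (x i) y')).det := by
      have := congrFun hcramer q
      simpa [Matrix.cramer_apply] using this
    have h2 : (M⁻¹.mulVec fun i => f (x i) y') q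
        = (M.updateCol q (fun i => f (x i) y')).det / M.det := by
      field_simp [hdet, mul_comm] at h1 ⊢
      linarith [h1]
    rw [h2, abs_div]
    rw [div_le_one (abs_pos.mpr hdet)]
    exact hmaxvol q y'
  calc ∑ q : Fin Q, |(M⁻¹.mulVec fun i => f (x i) y') q|
      ≤ ∑ _q : Fin Q, (1 : ℝ) := Finset.sum_le_sum fun q _ => key q
    _ = Q := by simp
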